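/- arXiv:1603.03830 — 4 statements merged into one kernel-verified Lean document; each statement's English description precedes it below -/
import Mathlib

section
/- Truncation lemma: let ξ₁, ξ₂, … be i.i.d. real random variables with E|ξ₁|^r < ∞ for some r > 0. Then there exists a sequence of positive numbers (η_n) with η_n → 0 as n → ∞ such that P(A_n infinitely often) = 0, where A_n is the event that there exists an index i with 1 ≤ i ≤ n and |ξ_i| > η_n·n^{1/r}; equivalently, almost surely, for all sufficiently large n one has max_{1 ≤ i ≤ n} |ξ_i| ≤ η_n·n^{1/r}. -/
open MeasureTheory ProbabilityTheory Filter
open scoped Topology ENNReal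

private lemma aux_tail_tsum {Ω : Type*} [MeasurableSpace Ω] (μ : Measure Ω)
    [IsProbabilityMeasure μ] (X : Ω → ℝ)
    (r ε : ℝ) (hr : 0 < r) (hε : 0 < ε)
    (hmom : Integrable (fun ω => |X ω| ^ r) μ) :
    (∑' n : ℕ, μ {ω | ε * (n : ℝ) ^ (1 / r) < |X ω|}) ≠ ∞ := by
  letI m : MeasureSpace Ω := { toMeasurableSpace := ‹MeasurableSpace Ω›, volume := μ }
  haveI : IsProbabilityMeasure (volume : Measure Ω) := ‹IsProbabilityMeasure μ›
  have h1 : Integrable (fun ω => |X ω| ^ r / ε ^ r) volume := hmom.div_const _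
  have h2 : (0 : Ω → ℝ) ≤ fun ω => |X ω| ^ r / ε ^ r := fun ω => by positivity
  have h3 := ProbabilityTheory.tsum_prob_mem_Ioi_lt_top h1 h2
  refine ne_of_lt (lt_of_le_of_lt (ENNReal.tsum_le_tsum fun n => measure_mono ?_) h3)
  intro ω hω
  simp only [Set.mem_setOf_eq, Set.mem_Ioi] at hω ⊢
  have hbase : (0 : ℝ) ≤ ε * (n : ℝ) ^ (1 / r) := by positivity
  have h4 : (ε * (n : ℝ) ^ (1 / r)) ^ r < |X ω| ^ r := Real.rpow_lt_rpow hbase hω hr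
  have h5 : (ε * (n : ℝ) ^ (1 / r)) ^ r = ε ^ r * (n : ℝ) := by
    rw [Real.mul_rpow hε.le (Real.rpow_nonneg (Nat.cast_nonneg n) _),
      ← Real.rpow_mul (Nat.cast_nonneg n), one_div_mul_cancel hr.ne', Real.rpow_one]
  rw [h5] at h4
  rw [lt_div_iff₀ (by positivity : (0 : ℝ) < ε ^ r)]
  linarith [h4]

/-- Truncation lemma: for i.i.d. real random variables `ξ₁, ξ₂, …` with `E|ξ₁|^r < ∞`
for some `r > 0`, there is a sequence of positive numbers `η_n → 0` such that almost
surely only finitely many of the events `{∃ i, 1 ≤ i ≤ n, |ξ_i| > η_n · n^{1/r}}` occur. -/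
theorem truncation_lemma
    {Ω : Type*} [MeasurableSpace Ω] (μ : Measure Ω) [IsProbabilityMeasure μ]
    (ξ : ℕ → Ω → ℝ)
    (hmeas : ∀ i, Measurable (ξ i))
    (hindep : iIndepFun ξ μ)
    (hident : ∀ i, μ.map (ξ i) = μ.map (ξ 1))
    (r : ℝ) (hr : 0 < r)
    (hmom : Integrable (fun ω => |ξ 1 ω| ^ r) μ) :
    ∃ η : ℕ → ℝ, (∀ n, 0 < η n) ∧ Tendsto η atTop (𝓝 0) ∧
      μ (Filter.limsup
          (fun n => {ω | ∃ i, 1 ≤ i ∧ i ≤ n ∧ η n * (n : ℝ) ^ (1 / r) < |ξ i ω|})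
          atTop) = 0 := by
  classical
  set T : ℝ → ℝ≥0∞ := fun t => μ {ω | t < |ξ 1 ω|} with hTdef
  have hident' : ∀ (i : ℕ) (t : ℝ), μ {ω | t < |ξ i ω|} = T t := by
    intro i t
    have hs : MeasurableSet {x : ℝ | t < |x|} :=
      measurableSet_lt measurable_const measurable_abs
    have h1 : μ {ω | t < |ξ i ω|} = (μ.map (ξ i)) {x | t < |x|} := by
      rw [Measure.map_apply (hmeas i) hs]; rfl
    have h2 : μ {ω | t < |ξ 1 ω|} = (μ.map (ξ 1)) {x | t < |x|} := by
      rw [Measure.map_apply (hmeas 1) hs]; rfl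
    rw [hTdef]
    simp only []
    rw [h1, hident i, ← h2]
  have hTanti : ∀ s t : ℝ, s ≤ t → T t ≤ T s := fun s t hst =>
    measure_mono fun ω hω => lt_of_le_of_lt hst hω
  have htail : ∀ ε : ℝ, 0 < ε → (∑' n : ℕ, T (ε * (n : ℝ) ^ (1 / r))) ≠ ∞ :=
    fun ε hε => aux_tail_tsum μ (ξ 1) r ε hr hε hmom
  -- choose tail cut points
  have htend : ∀ k : ℕ, ∃ Mk : ℕ, ∀ m, Mk ≤ m →
      (∑' a : ℕ, T (((k : ℝ) + 1)⁻¹ * ((a + m : ℕ) : ℝ) ^ (1 / r))) ≤ 2⁻¹ ^ k := by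
    intro k
    have hε : (0 : ℝ) < ((k : ℝ) + 1)⁻¹ := by positivity
    have h1 := ENNReal.tendsto_sum_nat_add
      (fun n => T (((k : ℝ) + 1)⁻¹ * (n : ℝ) ^ (1 / r))) (htail _ hε)
    have h2 : (0 : ℝ≥0∞) < 2⁻¹ ^ k := by
      simp [pos_iff_ne_zero, pow_ne_zero]
    obtain ⟨Mk, hMk⟩ := ENNReal.tendsto_atTop_zero.1 h1 (2⁻¹ ^ k) h2
    exact ⟨Mk, fun m hm => by simpa using hMk m hm⟩
  set M : ℕ → ℕ := fun k => (htend k).choose with hMdef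
  have hM : ∀ k m, M k ≤ m →
      (∑' a : ℕ, T (((k : ℝ) + 1)⁻¹ * ((a + m : ℕ) : ℝ) ^ (1 / r))) ≤ 2⁻¹ ^ k :=
    fun k => (htend k).choose_spec
  set B : ℕ → ℕ := fun k => ⌈((k : ℝ) * ((k : ℝ) + 1)) ^ r⌉₊ with hBdef
  set N : ℕ → ℕ := fun k =>
    Nat.rec 0 (fun k ih => max (M (k + 1)) (max (ih + 1) (B (k + 1)))) k with hNdef
  have hN0 : N 0 = 0 := rfl
  have hNsucc : ∀ k, N (k + 1) = max (M (k + 1)) (max (N k + 1) (B (k + 1))) := fun k => rfl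
  have hNmono : StrictMono N := strictMono_nat_of_lt_succ fun k => by
    rw [hNsucc]; omega
  have hNM : ∀ k, M (k + 1) ≤ N (k + 1) := fun k => by rw [hNsucc]; omega
  have hNB : ∀ k, B k ≤ N k := by
    intro k
    cases k with
    | zero =>
      have : ((0 : ℝ) * ((0 : ℝ) + 1)) ^ r = 0 := by
        rw [zero_mul, Real.zero_rpow hr.ne']
      simp only [hBdef, hN0, Nat.cast_zero, this, Nat.ceil_zero, le_refl]
    | succ k => rw [hNsucc]; omega
  have hgrow : ∀ k : ℕ, (k : ℝ) ≤ ((k : ℝ) + 1)⁻¹ * ((N k : ℕ) : ℝ) ^ (1 / r) := by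
    intro k
    have h1 : ((k : ℝ) * ((k : ℝ) + 1)) ^ r ≤ (N k : ℝ) :=
      le_trans (Nat.le_ceil _) (Nat.cast_le.2 (hNB k))
    have h0 : (0 : ℝ) ≤ (k : ℝ) * ((k : ℝ) + 1) := by positivity
    have h2 : (k : ℝ) * ((k : ℝ) + 1) ≤ (N k : ℝ) ^ (1 / r) := by
      calc (k : ℝ) * ((k : ℝ) + 1)
          = (((k : ℝ) * ((k : ℝ) + 1)) ^ r) ^ (1 / r) := by
            rw [← Real.rpow_mul h0, mul_one_div_cancel hr.ne', Real.rpow_one]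
        _ ≤ (N k : ℝ) ^ (1 / r) :=
            Real.rpow_le_rpow (by positivity) h1 (by positivity)
    calc (k : ℝ) = ((k : ℝ) + 1)⁻¹ * ((k : ℝ) * ((k : ℝ) + 1)) := by
          field_simp
      _ ≤ ((k : ℝ) + 1)⁻¹ * ((N k : ℕ) : ℝ) ^ (1 / r) := by
          apply mul_le_mul_of_nonneg_left h2 (by positivity)
  set κ : ℕ → ℕ := fun n => Nat.findGreatest (fun k => N k ≤ n) n with hκdef
  have hκ1 : ∀ n, N (κ n) ≤ n := by
    intro n
    exact Nat.findGreatest_spec (P := fun k => N k ≤ n) (Nat.zero_le n)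
      (show N 0 ≤ n from hN0.le.trans (Nat.zero_le n))
  have hκ2 : ∀ k n, N k ≤ n → k ≤ κ n := fun k n h =>
    Nat.le_findGreatest (hNmono.le_apply.trans h) h
  set e : ℕ → ℝ := fun n => ((κ n : ℝ) + 1)⁻¹ with hedef
  have he_pos : ∀ n, 0 < e n := fun n => by positivity
  set c : ℕ → ℝ := fun n =>
    (Finset.range (n + 1)).sup' Finset.nonempty_range_add_one
      (fun i => e i * (i : ℝ) ^ (1 / r)) with hcdef
  have hc_mono : Monotone c := fun a b hab =>
    Finset.sup'_mono _ (Finset.range_subset_range.2 (by omega)) _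
  have hc_ge : ∀ n, e n * (n : ℝ) ^ (1 / r) ≤ c n := fun n =>
    Finset.le_sup' (fun i => e i * (i : ℝ) ^ (1 / r)) (Finset.self_mem_range_succ n)
  have hc_pos : ∀ n, 1 ≤ n → 0 < c n := by
    intro n hn
    refine lt_of_lt_of_le ?_ (hc_ge n)
    have hn0 : (0 : ℝ) < (n : ℝ) := Nat.cast_pos.2 hn
    have := he_pos n
    positivity
  have hc_big : ∀ k n : ℕ, N k ≤ n → (k : ℝ) ≤ c n := by
    intro k n h
    have h1 : k ≤ κ n := hκ2 k n h
    have h2 : (κ n : ℝ) ≤ e n * (n : ℝ) ^ (1 / r) := by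
      refine (hgrow (κ n)).trans ?_
      rw [hedef]
      have h3 : ((N (κ n) : ℕ) : ℝ) ^ (1 / r) ≤ (n : ℝ) ^ (1 / r) :=
        Real.rpow_le_rpow (Nat.cast_nonneg _) (Nat.cast_le.2 (hκ1 n)) (by positivity)
      apply mul_le_mul_of_nonneg_left h3 (by positivity)
    calc (k : ℝ) ≤ (κ n : ℝ) := Nat.cast_le.2 h1
      _ ≤ e n * (n : ℝ) ^ (1 / r) := h2
      _ ≤ c n := hc_ge n
  have hc_unbdd : ∀ R : ℝ, ∃ n₀ : ℕ, ∀ n, n₀ ≤ n → R ≤ c n := by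
    intro R
    refine ⟨N ⌈R⌉₊, fun n hn => ?_⟩
    calc R ≤ (⌈R⌉₊ : ℝ) := Nat.le_ceil R
      _ ≤ c n := hc_big _ n hn
  set η : ℕ → ℝ := fun n => if n = 0 then 1 else c n / (n : ℝ) ^ (1 / r) with hηdef
  have hη_pos : ∀ n, 0 < η n := by
    intro n
    by_cases hn : n = 0
    · simp [hηdef, hn]
    · have hn1 : 1 ≤ n := Nat.one_le_iff_ne_zero.2 hn
      have hn0 : (0 : ℝ) < (n : ℝ) := Nat.cast_pos.2 hn1
      simp only [hηdef, hn, if_false]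
      exact div_pos (hc_pos n hn1) (Real.rpow_pos_of_pos hn0 _)
  have hηc : ∀ n, 1 ≤ n → η n * (n : ℝ) ^ (1 / r) = c n := by
    intro n hn
    have h0 : (0 : ℝ) < (n : ℝ) ^ (1 / r) :=
      Real.rpow_pos_of_pos (Nat.cast_pos.2 hn) _
    simp only [hηdef]
    rw [if_neg (by omega : ¬ n = 0), div_mul_cancel₀ _ h0.ne']
  have hrinv : (0 : ℝ) < 1 / r := by positivity
  have hη_tendsto : Tendsto η atTop (𝓝 0) := by
    rw [Metric.tendsto_atTop]
    intro δ hδ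
    obtain ⟨j, hj⟩ := exists_nat_one_div_lt (half_pos hδ)
    have htop : Tendsto (fun n : ℕ => (n : ℝ) ^ (1 / r)) atTop atTop :=
      (tendsto_rpow_atTop hrinv).comp tendsto_natCast_atTop_atTop
    have hdiv : Tendsto (fun n : ℕ => c (N j) / (n : ℝ) ^ (1 / r)) atTop (𝓝 0) :=
      Tendsto.div_atTop tendsto_const_nhds htop
    obtain ⟨n₁, hn₁⟩ := Metric.tendsto_atTop.1 hdiv (δ / 2) (half_pos hδ)
    refine ⟨max (max n₁ (N j)) 1, fun n hn => ?_⟩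
    have hn1 : 1 ≤ n := le_trans (le_max_right _ _) hn
    have hnj : N j ≤ n := le_trans (le_trans (le_max_right _ _) (le_max_left _ _)) hn
    have hnn₁ : n₁ ≤ n := le_trans (le_trans (le_max_left _ _) (le_max_left _ _)) hn
    have hnpos : (0 : ℝ) < (n : ℝ) := Nat.cast_pos.2 hn1
    have hpow : (0 : ℝ) < (n : ℝ) ^ (1 / r) := Real.rpow_pos_of_pos hnpos _
    have hcn : c n ≤ max (c (N j)) (((j : ℝ) + 1)⁻¹ * (n : ℝ) ^ (1 / r)) := by
      rw [hcdef]
      apply Finset.sup'_le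
      intro i hi
      have hin : i ≤ n := by
        have := Finset.mem_range.1 hi; omega
      rcases le_or_gt i (N j) with h | h
      · refine le_trans ?_ (le_max_left _ _)
        exact Finset.le_sup' (fun i => e i * (i : ℝ) ^ (1 / r))
          (Finset.mem_range.2 (by omega))
      · refine le_trans ?_ (le_max_right _ _)
        have h1 : j ≤ κ i := hκ2 j i h.le
        have h2 : e i ≤ ((j : ℝ) + 1)⁻¹ := by
          rw [hedef]
          have h1' : (j : ℝ) ≤ (κ i : ℝ) := Nat.cast_le.2 h1
          apply inv_anti₀ (by positivity)
          linarith
        have h3 : (i : ℝ) ^ (1 / r) ≤ (n : ℝ) ^ (1 / r) :=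
          Real.rpow_le_rpow (Nat.cast_nonneg i) (Nat.cast_le.2 hin) hrinv.le
        exact mul_le_mul h2 h3 (by positivity) (by positivity)
    have hηn : η n = c n / (n : ℝ) ^ (1 / r) := by
      simp only [hηdef]; exact if_neg (by omega)
    rw [Real.dist_eq, sub_zero, abs_of_pos (hη_pos n), hηn, div_lt_iff₀ hpow]
    refine lt_of_le_of_lt hcn (max_lt ?_ ?_)
    · have h4 := hn₁ n hnn₁
      rw [Real.dist_eq, sub_zero] at h4
      have h5 : c (N j) / (n : ℝ) ^ (1 / r) < δ / 2 := lt_of_le_of_lt (le_abs_self _) h4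
      have h6 := (div_lt_iff₀ hpow).1 h5
      nlinarith
    · have h5 : ((j : ℝ) + 1)⁻¹ < δ / 2 := by
        rw [← one_div]; exact_mod_cast hj
      nlinarith
  -- the single-index events
  set Bs : ℕ → Set Ω := fun i => {ω | c i < |ξ i ω|} with hBsdef
  have hsub : Filter.limsup
      (fun n => {ω | ∃ i, 1 ≤ i ∧ i ≤ n ∧ η n * (n : ℝ) ^ (1 / r) < |ξ i ω|}) atTop
      ⊆ Filter.limsup Bs atTop := by
    intro ω hω
    rw [Filter.mem_limsup_iff_frequently_mem, Filter.frequently_atTop] at hω ⊢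
    intro I
    obtain ⟨n₀, hn₀⟩ := hc_unbdd (∑ i ∈ Finset.range (I + 1), |ξ i ω|)
    obtain ⟨n, hn, i, hi1, hin, hlt⟩ := hω (max n₀ 1)
    rw [hηc n (le_trans (le_max_right _ _) hn)] at hlt
    have hcn : (∑ i ∈ Finset.range (I + 1), |ξ i ω|) ≤ c n :=
      hn₀ n (le_trans (le_max_left _ _) hn)
    have hIi : I + 1 ≤ i := by
      by_contra h
      push_neg at h
      have hmem : i ∈ Finset.range (I + 1) := Finset.mem_range.2 h
      have hle : |ξ i ω| ≤ ∑ i ∈ Finset.range (I + 1), |ξ i ω| :=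
        Finset.single_le_sum (f := fun i => |ξ i ω|) (fun j _ => abs_nonneg _) hmem
      linarith
    exact ⟨i, by omega, lt_of_le_of_lt (hc_mono hin) hlt⟩
  set f : (Σ _ : ℕ, ℕ) → ℝ≥0∞ :=
    fun p => T (((p.1 : ℝ) + 1)⁻¹ * ((p.2 + N p.1 : ℕ) : ℝ) ^ (1 / r)) with hfdef
  have hinj : Function.Injective
      (fun i : ℕ => (⟨κ i, i - N (κ i)⟩ : Σ _ : ℕ, ℕ)) := by
    intro a b hab
    have h1 : κ a = κ b := congrArg (fun p : (Σ _ : ℕ, ℕ) => p.1) hab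
    have h2' : a - N (κ a) = b - N (κ b) := congrArg (fun p : (Σ _ : ℕ, ℕ) => p.2) hab
    have h3 : N (κ a) = N (κ b) := by rw [h1]
    have := hκ1 a
    have := hκ1 b
    omega
  have hsum : (∑' i : ℕ, μ (Bs i)) ≠ ∞ := by
    have hterm : ∀ i, μ (Bs i) ≤ f ⟨κ i, i - N (κ i)⟩ := by
      intro i
      have h1 : μ (Bs i) = T (c i) := hident' i (c i)
      have h2 : f ⟨κ i, i - N (κ i)⟩ = T (e i * (i : ℝ) ^ (1 / r)) := by
        simp only [hfdef, hedef]
        rw [Nat.sub_add_cancel (hκ1 i)]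
      rw [h1, h2]
      exact hTanti _ _ (hc_ge i)
    have hfin : (∑' k : ℕ, ∑' a : ℕ, f ⟨k, a⟩) < ∞ := by
      have h0 : (∑' a : ℕ, f ⟨0, a⟩) ≠ ∞ := by
        have h := htail (((0 : ℝ) + 1)⁻¹) (by norm_num)
        have he : ∀ a : ℕ, f ⟨0, a⟩ = T (((0 : ℝ) + 1)⁻¹ * (a : ℝ) ^ (1 / r)) := by
          intro a
          simp only [hfdef]
          norm_num [hN0]
        rw [tsum_congr he]
        exact h
      have hk : ∀ k : ℕ, (∑' a : ℕ, f ⟨k + 1, a⟩) ≤ 2⁻¹ ^ (k + 1) := by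
        intro k
        have h := hM (k + 1) (N (k + 1)) (hNM k)
        have he : ∀ a : ℕ, f ⟨k + 1, a⟩
            = T ((((k + 1 : ℕ) : ℝ) + 1)⁻¹ * ((a + N (k + 1) : ℕ) : ℝ) ^ (1 / r)) :=
          fun a => rfl
        rw [tsum_congr he]
        exact h
      rw [tsum_eq_zero_add' ENNReal.summable]
      refine ENNReal.add_lt_top.2 ⟨h0.lt_top, ?_⟩
      have hle : (∑' k : ℕ, ∑' a : ℕ, f ⟨k + 1, a⟩) ≤ ∑' k : ℕ, (2 : ℝ≥0∞)⁻¹ ^ k := by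
        refine ENNReal.tsum_le_tsum fun k => le_trans (hk k) ?_
        exact pow_le_pow_of_le_one zero_le (by norm_num) (by omega)
      refine lt_of_le_of_lt hle ?_
      rw [ENNReal.tsum_geometric]
      refine ENNReal.inv_lt_top.2 ?_
      rw [ENNReal.one_sub_inv_two]
      simp
    have hle2 : (∑' i : ℕ, μ (Bs i)) ≤ ∑' k : ℕ, ∑' a : ℕ, f ⟨k, a⟩ := by
      calc (∑' i : ℕ, μ (Bs i))
          ≤ ∑' i : ℕ, f ⟨κ i, i - N (κ i)⟩ := ENNReal.tsum_le_tsum hterm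
        _ ≤ ∑' p : Σ _ : ℕ, ℕ, f p := ENNReal.tsum_comp_le_tsum_of_injective hinj f
        _ = ∑' k : ℕ, ∑' a : ℕ, f ⟨k, a⟩ := ENNReal.tsum_sigma' f
    exact ne_of_lt (lt_of_le_of_lt hle2 hfin)
  refine ⟨η, hη_pos, hη_tendsto, ?_⟩
  exact measure_mono_null hsub (measure_limsup_atTop_eq_zero hsum)
end

section
/- Expectation of T₂: let ξ₁,…,ξₙ be i.i.d. real random variables with distribution symmetric about 0, E ξ₁² = 1 and M₄ := E ξ₁⁴ < ∞, and let A = (a_{ij}) be an n×n real matrix with B := AAᵀ. Then E[ n⁻¹·(Σ_{i=1}^n (Σ_{j=1}^n a_{ij} ξ_j)²)² ] = n⁻¹·( (tr B)² + 2·tr(B²) + ν₄·Σ_{j=1}^n ((AᵀA)_{jj})² ) = n⁻¹·( (tr B)² + 2·tr(B²) + ν₄·tr((AᵀA)∘(AᵀA)) ), where ν₄ := M₄ − 3. -/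
open MeasureTheory ProbabilityTheory Matrix
open scoped Matrix

section AuxExpectationT2
set_option linter.unusedSectionVars false


lemma aux_prod_int {Ω : Type*} [MeasurableSpace Ω] (μ : Measure Ω) [IsProbabilityMeasure μ]
    {n : ℕ} (g : Fin n → Ω → ℝ) (hmeas : ∀ i, Measurable (g i))
    (hindep : iIndepFun g μ)
    (hint : ∀ i, Integrable (g i) μ) (s : Finset (Fin n)) :
    Integrable (fun ω => ∏ i ∈ s, g i ω) μ ∧
      ∫ ω, ∏ i ∈ s, g i ω ∂μ = ∏ i ∈ s, ∫ ω, g i ω ∂μ := by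
  classical
  induction s using Finset.induction_on with
  | empty => simp
  | @insert a s ha ih =>
    have hIF : IndepFun (∏ j ∈ s, g j) (g a) μ :=
      hindep.indepFun_finsetProd_of_notMem hmeas ha
    have hIF' : IndepFun (fun ω => ∏ j ∈ s, g j ω) (g a) μ := by
      simpa [Finset.prod_fn] using hIF
    have hint_prod : Integrable (fun ω => ∏ i ∈ s, g i ω) μ := ih.1
    have h1 : Integrable (fun ω => (∏ i ∈ s, g i ω) * g a ω) μ :=
      hIF'.integrable_mul hint_prod (hint a)
    constructor
    · simpa [Finset.prod_insert ha, mul_comm] using h1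
    · rw [show (fun ω => ∏ i ∈ insert a s, g i ω)
          = fun ω => (∏ i ∈ s, g i ω) * g a ω from by
          funext ω; rw [Finset.prod_insert ha]; ring]
      have h2 := hIF'.integral_fun_mul_eq_mul_integral hint_prod.aestronglyMeasurable (hint a).aestronglyMeasurable
      have h2' : ∫ ω, (∏ i ∈ s, g i ω) * g a ω ∂μ
          = (∫ ω, ∏ j ∈ s, g j ω ∂μ) * ∫ ω, g a ω ∂μ := by
        rw [← h2]
      rw [h2', ih.2, Finset.prod_insert ha]
      ring

section
set_option linter.unusedSectionVars false

variable {Ω : Type*} [MeasurableSpace Ω] (μ : Measure Ω) [IsProbabilityMeasure μ]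
    {n : ℕ} (ξ : Fin n → Ω → ℝ)

lemma aux_int_pow (hmeas : ∀ i, Measurable (ξ i))
    (hint4 : ∀ i, Integrable (fun ω => (ξ i ω) ^ 4) μ)
    (i : Fin n) (k : ℕ) (hk : k ≤ 4) :
    Integrable (fun ω => (ξ i ω) ^ k) μ := by
  have hb : ∀ x : ℝ, ‖x ^ k‖ ≤ 1 + x ^ 4 := by
    intro x
    have h4 : (0:ℝ) ≤ x ^ 4 := by positivity
    rw [norm_pow, Real.norm_eq_abs]
    rcases le_total |x| 1 with h | h
    · have : |x| ^ k ≤ 1 := pow_le_one₀ (abs_nonneg x) h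
      linarith
    · have : |x| ^ k ≤ |x| ^ 4 := pow_le_pow_right₀ h hk
      have h4' : |x| ^ 4 = x ^ 4 := by
        rw [← abs_pow, abs_of_nonneg h4]
      linarith [this, h4'.le]
  refine Integrable.mono' ((integrable_const (1:ℝ)).add (hint4 i))
    ((hmeas i).pow_const k).aestronglyMeasurable ?_
  filter_upwards with ω using hb (ξ i ω)

lemma aux_odd_moment (hmeas : ∀ i, Measurable (ξ i))
    (hsymm : ∀ i, μ.map (ξ i) = μ.map (fun ω => -ξ i ω))
    (i : Fin n) (k : ℕ) (hk : Odd k) :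
    ∫ ω, (ξ i ω) ^ k ∂μ = 0 := by
  have hsm : AEStronglyMeasurable (fun x : ℝ => x ^ k) (μ.map (ξ i)) := by fun_prop
  have hsm' : AEStronglyMeasurable (fun x : ℝ => x ^ k) (μ.map (fun ω => -ξ i ω)) := by fun_prop
  have h1 : ∫ ω, (ξ i ω) ^ k ∂μ = ∫ x, x ^ k ∂(μ.map (ξ i)) :=
    (integral_map (hmeas i).aemeasurable hsm).symm
  have h2 : ∫ x, x ^ k ∂(μ.map (fun ω => -ξ i ω)) = ∫ ω, (-ξ i ω) ^ k ∂μ :=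
    integral_map (hmeas i).neg.aemeasurable hsm'
  have h3 : ∫ ω, (-ξ i ω) ^ k ∂μ = - ∫ ω, (ξ i ω) ^ k ∂μ := by
    simp_rw [hk.neg_pow]
    exact integral_neg _
  have h4 : ∫ ω, (ξ i ω) ^ k ∂μ = - ∫ ω, (ξ i ω) ^ k ∂μ :=
    h1.trans (by rw [hsymm i]; exact h2.trans h3)
  linarith

end

lemma aux_P {Ω : Type*} [MeasurableSpace Ω] (μ : Measure Ω) [IsProbabilityMeasure μ]
    {n : ℕ} (ξ : Fin n → Ω → ℝ)
    (hmeas : ∀ i, Measurable (ξ i))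
    (hindep : iIndepFun ξ μ)
    (hsymm : ∀ i, μ.map (ξ i) = μ.map (fun ω => -ξ i ω))
    (hvar : ∀ i, ∫ ω, (ξ i ω) ^ 2 ∂μ = 1)
    (hint4 : ∀ i, Integrable (fun ω => (ξ i ω) ^ 4) μ)
    (M4 : ℝ) (hM4 : ∀ i, ∫ ω, (ξ i ω) ^ 4 ∂μ = M4)
    (j k l m : Fin n) :
    Integrable (fun ω => ξ j ω * ξ k ω * ξ l ω * ξ m ω) μ ∧
    ∫ ω, ξ j ω * ξ k ω * ξ l ω * ξ m ω ∂μ =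
      (if j = k then (1:ℝ) else 0) * (if l = m then 1 else 0)
      + (if j = l then (1:ℝ) else 0) * (if k = m then 1 else 0)
      + (if j = m then (1:ℝ) else 0) * (if k = l then 1 else 0)
      + (M4 - 3) * ((if j = k then (1:ℝ) else 0) * (if j = l then 1 else 0)
          * (if j = m then 1 else 0)) := by
  classical
  set e : Fin n → ℕ := fun i =>
    (if i = j then 1 else 0) + (if i = k then 1 else 0)
      + (if i = l then 1 else 0) + (if i = m then 1 else 0) with he
  have he4 : ∀ i, e i ≤ 4 := by
    intro i; simp only [he]; split_ifs <;> norm_num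
  have hkey : ∀ (x : Fin n → ℝ) (a : Fin n),
      (∏ i, x i ^ (if i = a then 1 else 0)) = x a := by
    intro x a
    rw [Finset.prod_eq_single a]
    · simp
    · intro b _ hb; simp [hb]
    · simp
  have hmonof : ∀ ω, ξ j ω * ξ k ω * ξ l ω * ξ m ω = ∏ i, (ξ i ω) ^ e i := by
    intro ω
    simp only [he, pow_add, Finset.prod_mul_distrib, hkey (fun i => ξ i ω)]
  have hgmeas : ∀ i, Measurable (fun ω => (ξ i ω) ^ e i) :=
    fun i => (hmeas i).pow_const (e i)
  have hgindep : iIndepFun (fun i ω => (ξ i ω) ^ e i) μ :=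
    hindep.comp (fun i x => x ^ e i) (fun i => measurable_id.pow_const (e i))
  have hgint : ∀ i, Integrable (fun ω => (ξ i ω) ^ e i) μ :=
    fun i => aux_int_pow μ ξ hmeas hint4 i (e i) (he4 i)
  obtain ⟨hInt, hEq⟩ := aux_prod_int μ (fun i ω => (ξ i ω) ^ e i) hgmeas hgindep hgint
    Finset.univ
  constructor
  · have : (fun ω => ξ j ω * ξ k ω * ξ l ω * ξ m ω)
        = fun ω => ∏ i, (ξ i ω) ^ e i := funext hmonof
    rw [this]; exact hInt
  rw [show (fun ω => ξ j ω * ξ k ω * ξ l ω * ξ m ω)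
      = fun ω => ∏ i, (ξ i ω) ^ e i from funext hmonof]
  rw [hEq]
  -- helper computations
  have hzero : ∀ a : Fin n, e a = 1 ∨ e a = 3 →
      (∏ i, ∫ ω, (ξ i ω) ^ e i ∂μ) = 0 := by
    intro a ha
    apply Finset.prod_eq_zero (Finset.mem_univ a)
    rcases ha with h | h <;> rw [h] <;>
      exact aux_odd_moment μ ξ hmeas hsymm a _ (by decide)
  have hone : (∀ i : Fin n, e i = 0 ∨ e i = 2) →
      (∏ i, ∫ ω, (ξ i ω) ^ e i ∂μ) = 1 := by
    intro h
    refine Finset.prod_eq_one fun i _ => ?_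
    rcases h i with h' | h' <;> rw [h']
    · simp
    · exact hvar i
  have hfour : e j = 4 → (∀ i, i ≠ j → e i = 0) →
      (∏ i, ∫ ω, (ξ i ω) ^ e i ∂μ) = M4 := by
    intro h4 h0
    rw [Finset.prod_eq_single j]
    · rw [h4]; exact hM4 j
    · intro b _ hb; rw [h0 b hb]; simp
    · simp
  -- the case analysis
  rcases eq_or_ne j k with hjk | hjk
  · subst hjk
    rcases eq_or_ne j l with hjl | hjl
    · subst hjl
      rcases eq_or_ne j m with hjm | hjm
      · subst hjm
        rw [hfour (by simp [he]) (fun i hi => by simp [he, hi])]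
        simp; ring
      · rw [hzero j (Or.inr (by simp [he, hjm]))]
        simp [hjm]
    · rcases eq_or_ne j m with hjm | hjm
      · subst hjm
        rw [hzero j (Or.inr (by simp [he, hjl]))]
        simp [hjl, Ne.symm hjl]
      · rcases eq_or_ne l m with hlm | hlm
        · subst hlm
          rw [hone (fun i => by
            by_cases h1 : i = j
            · right; simp [he, h1, hjl]
            · by_cases h2 : i = l
              · right; simp [he, h1, h2, Ne.symm hjl]
              · left; simp [he, h1, h2])]
          simp [hjl, hjm, Ne.symm hjl]
        · rw [hzero l (Or.inl (by simp [he, Ne.symm hjl, hlm]))]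
          simp [hjl, hjm, hlm, Ne.symm hjl]
  · rcases eq_or_ne j l with hjl | hjl
    · subst hjl
      rcases eq_or_ne k m with hkm | hkm
      · subst hkm
        rw [hone (fun i => by
          by_cases h1 : i = j
          · right; simp [he, h1, hjk]
          · by_cases h2 : i = k
            · right; simp [he, h1, h2, Ne.symm hjk]
            · left; simp [he, h1, h2])]
        simp [hjk, Ne.symm hjk]
      · rw [hzero k (Or.inl (by simp [he, Ne.symm hjk, hkm]))]
        simp [hjk, hkm, Ne.symm hjk, Ne.symm hkm]
    · rcases eq_or_ne j m with hjm | hjm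
      · subst hjm
        rcases eq_or_ne k l with hkl | hkl
        · subst hkl
          rw [hone (fun i => by
            by_cases h1 : i = j
            · right; simp [he, h1, hjk]
            · by_cases h2 : i = k
              · right; simp [he, h1, h2, Ne.symm hjk]
              · left; simp [he, h1, h2])]
          simp [hjk, hjl, Ne.symm hjk, Ne.symm hjl]
        · rw [hzero k (Or.inl (by simp [he, Ne.symm hjk, hkl]))]
          simp [hjk, hjl, hkl, Ne.symm hjk, Ne.symm hjl, Ne.symm hkl]
      · rw [hzero j (Or.inl (by simp [he, hjk, hjl, hjm]))]
        simp [hjk, hjl, hjm]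


lemma aux_core {n : ℕ} (A : Matrix (Fin n) (Fin n) ℝ) (v : ℝ) :
  ∑ i, ∑ i', ∑ j, ∑ l, ∑ k, ∑ m, (A i j * A i k * A i' l * A i' m) *
    ((if j = k then (1:ℝ) else 0) * (if l = m then 1 else 0)
     + (if j = l then (1:ℝ) else 0) * (if k = m then 1 else 0)
     + (if j = m then (1:ℝ) else 0) * (if k = l then 1 else 0)
     + v * ((if j = k then (1:ℝ) else 0) * (if j = l then 1 else 0) * (if j = m then 1 else 0)))
  = (A * Aᵀ).trace ^ 2 + 2 * ((A * Aᵀ) * (A * Aᵀ)).trace + v * ∑ j, ((Aᵀ * A) j j)^2 := by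
  simp only [mul_ite, ite_mul, mul_one, mul_zero, one_mul, zero_mul, mul_add, add_mul,
    Finset.sum_add_distrib, Finset.sum_ite_irrel, Finset.sum_const_zero,
    Finset.sum_ite_eq, Finset.sum_ite_eq', Finset.mem_univ, if_true]
  have e1 : (∑ x : Fin n, ∑ x1 : Fin n, ∑ x2 : Fin n, ∑ x3 : Fin n,
      A x x2 * A x x2 * A x1 x3 * A x1 x3) = (A * Aᵀ).trace ^ 2 := by
    simp only [Matrix.trace, Matrix.diag, Matrix.mul_apply, Matrix.transpose_apply, pow_two,
      Finset.sum_mul_sum]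
    refine Finset.sum_congr rfl fun a _ => Finset.sum_congr rfl fun b _ =>
      Finset.sum_congr rfl fun c _ => Finset.sum_congr rfl fun d _ => by ring
  have e2 : (∑ x : Fin n, ∑ x1 : Fin n, ∑ x2 : Fin n, ∑ x3 : Fin n,
      A x x2 * A x x3 * A x1 x2 * A x1 x3) = ((A * Aᵀ) * (A * Aᵀ)).trace := by
    simp only [Matrix.trace, Matrix.diag, Matrix.mul_apply, Matrix.transpose_apply,
      Finset.sum_mul_sum, Finset.sum_mul, Finset.mul_sum]
    refine Finset.sum_congr rfl fun a _ => Finset.sum_congr rfl fun b _ =>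
      Finset.sum_congr rfl fun c _ => Finset.sum_congr rfl fun d _ => by ring
  have e3 : (∑ x : Fin n, ∑ x1 : Fin n, ∑ x2 : Fin n, ∑ x3 : Fin n,
      A x x2 * A x x3 * A x1 x3 * A x1 x2) = ((A * Aᵀ) * (A * Aᵀ)).trace := by
    rw [← e2]
    refine Finset.sum_congr rfl fun a _ => Finset.sum_congr rfl fun b _ => ?_
    rw [Finset.sum_comm]
    refine Finset.sum_congr rfl fun c _ => Finset.sum_congr rfl fun d _ => by ring
  have e4 : (∑ x : Fin n, ∑ x1 : Fin n, ∑ x2 : Fin n,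
      A x x2 * A x x2 * A x1 x2 * A x1 x2 * v) = v * ∑ j, ((Aᵀ * A) j j)^2 :=
    calc (∑ x : Fin n, ∑ x1 : Fin n, ∑ x2 : Fin n, A x x2 * A x x2 * A x1 x2 * A x1 x2 * v)
        = ∑ x : Fin n, ∑ x2 : Fin n, ∑ x1 : Fin n,
            A x x2 * A x x2 * A x1 x2 * A x1 x2 * v :=
          Finset.sum_congr rfl (fun x _ => Finset.sum_comm)
      _ = ∑ x2 : Fin n, ∑ x : Fin n, ∑ x1 : Fin n,
            A x x2 * A x x2 * A x1 x2 * A x1 x2 * v := Finset.sum_comm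
      _ = v * ∑ j, ((Aᵀ * A) j j)^2 := by
          rw [Finset.mul_sum]
          refine Finset.sum_congr rfl fun j _ => ?_
          have hAA : (Aᵀ * A) j j = ∑ x, A x j * A x j := by
            simp [Matrix.mul_apply, Matrix.transpose_apply]
          rw [hAA, pow_two, Finset.sum_mul_sum, Finset.mul_sum]
          refine Finset.sum_congr rfl fun a _ => ?_
          rw [Finset.mul_sum]
          refine Finset.sum_congr rfl fun b _ => by ring
  rw [e1, e2, e3, e4]; ring


open MeasureTheory ProbabilityTheory Matrix
open scoped Matrix


end AuxExpectationT2

/-- Expectation of `T₂ = n⁻¹(Σᵢ (Σⱼ aᵢⱼ ξⱼ)²)²` for i.i.d. symmetric `ξ` with unit variance and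
fourth moment `M₄`:
`E T₂ = n⁻¹((tr B)² + 2·tr(B²) + ν₄·Σⱼ ((AᵀA)ⱼⱼ)²) = n⁻¹((tr B)² + 2·tr(B²) + ν₄·tr((AᵀA)∘(AᵀA)))`
where `B = AAᵀ` and `ν₄ = M₄ − 3`. -/
theorem expectation_T2
    {Ω : Type*} [MeasurableSpace Ω] (μ : Measure Ω) [IsProbabilityMeasure μ]
    {n : ℕ} (ξ : Fin n → Ω → ℝ)
    (hmeas : ∀ i, Measurable (ξ i))
    (hindep : iIndepFun ξ μ)
    (hident : ∀ i j, μ.map (ξ i) = μ.map (ξ j))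
    (hsymm : ∀ i, μ.map (ξ i) = μ.map (fun ω => -ξ i ω))
    (hvar : ∀ i, ∫ ω, (ξ i ω) ^ 2 ∂μ = 1)
    (hint4 : ∀ i, Integrable (fun ω => (ξ i ω) ^ 4) μ)
    (M4 ν4 : ℝ)
    (hM4 : ∀ i, ∫ ω, (ξ i ω) ^ 4 ∂μ = M4)
    (hν4 : ν4 = M4 - 3)
    (A B : Matrix (Fin n) (Fin n) ℝ) (hB : B = A * Aᵀ) :
    (∫ ω, (1 / (n : ℝ)) * (∑ i, (∑ j, A i j * ξ j ω) ^ 2) ^ 2 ∂μ)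
        = (1 / (n : ℝ)) * (B.trace ^ 2 + 2 * (B * B).trace
            + ν4 * ∑ j, ((Aᵀ * A) j j) ^ 2)
    ∧ (∫ ω, (1 / (n : ℝ)) * (∑ i, (∑ j, A i j * ξ j ω) ^ 2) ^ 2 ∂μ)
        = (1 / (n : ℝ)) * (B.trace ^ 2 + 2 * (B * B).trace
            + ν4 * ((Aᵀ * A) ⊙ (Aᵀ * A)).trace) := by
  classical
  subst hB hν4
  have hP := fun j k l m => aux_P μ ξ hmeas hindep hsymm hvar hint4 M4 hM4 j k l m
  -- expansion of the square into a sum over sextuples (i, i', j, l, k, m)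
  have hexp : ∀ ω, (∑ i, (∑ j, A i j * ξ j ω) ^ 2) ^ 2
      = ∑ p : Fin n × Fin n × Fin n × Fin n × Fin n × Fin n,
          (A p.1 p.2.2.1 * A p.1 p.2.2.2.2.1 * A p.2.1 p.2.2.2.1 * A p.2.1 p.2.2.2.2.2)
          * (ξ p.2.2.1 ω * ξ p.2.2.2.2.1 ω * ξ p.2.2.2.1 ω * ξ p.2.2.2.2.2 ω) := by
    intro ω
    simp only [Fintype.sum_prod_type]
    simp only [pow_two, Finset.sum_mul_sum]
    refine Finset.sum_congr rfl fun i _ => Finset.sum_congr rfl fun i' _ =>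
      Finset.sum_congr rfl fun j _ => Finset.sum_congr rfl fun l _ =>
      Finset.sum_congr rfl fun k _ => Finset.sum_congr rfl fun m _ => by ring
  have hmain : (∫ ω, (1 / (n : ℝ)) * (∑ i, (∑ j, A i j * ξ j ω) ^ 2) ^ 2 ∂μ)
      = (1 / (n : ℝ)) * ((A * Aᵀ).trace ^ 2 + 2 * ((A * Aᵀ) * (A * Aᵀ)).trace
          + (M4 - 3) * ∑ j, ((Aᵀ * A) j j) ^ 2) := by
    rw [integral_const_mul]
    congr 1
    rw [integral_congr_ae (Filter.Eventually.of_forall hexp)]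
    rw [integral_finset_sum _ (fun p _ => ((hP p.2.2.1 p.2.2.2.2.1 p.2.2.2.1
      p.2.2.2.2.2).1).const_mul _)]
    have hterm : ∀ p : Fin n × Fin n × Fin n × Fin n × Fin n × Fin n,
        (∫ ω, (A p.1 p.2.2.1 * A p.1 p.2.2.2.2.1 * A p.2.1 p.2.2.2.1 * A p.2.1 p.2.2.2.2.2)
          * (ξ p.2.2.1 ω * ξ p.2.2.2.2.1 ω * ξ p.2.2.2.1 ω * ξ p.2.2.2.2.2 ω) ∂μ)
        = (A p.1 p.2.2.1 * A p.1 p.2.2.2.2.1 * A p.2.1 p.2.2.2.1 * A p.2.1 p.2.2.2.2.2)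
          * ((if p.2.2.1 = p.2.2.2.2.1 then (1:ℝ) else 0)
              * (if p.2.2.2.1 = p.2.2.2.2.2 then 1 else 0)
            + (if p.2.2.1 = p.2.2.2.1 then (1:ℝ) else 0)
              * (if p.2.2.2.2.1 = p.2.2.2.2.2 then 1 else 0)
            + (if p.2.2.1 = p.2.2.2.2.2 then (1:ℝ) else 0)
              * (if p.2.2.2.2.1 = p.2.2.2.1 then 1 else 0)
            + (M4 - 3) * ((if p.2.2.1 = p.2.2.2.2.1 then (1:ℝ) else 0)
              * (if p.2.2.1 = p.2.2.2.1 then 1 else 0)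
              * (if p.2.2.1 = p.2.2.2.2.2 then 1 else 0))) := by
      intro p
      rw [integral_const_mul, (hP p.2.2.1 p.2.2.2.2.1 p.2.2.2.1 p.2.2.2.2.2).2]
    rw [Finset.sum_congr rfl (fun p _ => hterm p)]
    rw [← aux_core A (M4 - 3)]
    simp only [Fintype.sum_prod_type]
  have hhad : ((Aᵀ * A) ⊙ (Aᵀ * A)).trace = ∑ j, ((Aᵀ * A) j j) ^ 2 := by
    simp [Matrix.trace, Matrix.diag, Matrix.hadamard_apply, pow_two]
  exact ⟨hmain, by rw [hmain, hhad]⟩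
end

section
/- Pairing-count identity: for all natural numbers s₁, s₂, s₃ with s := s₁ + s₂ + s₃, one has C(2s, 2s₁+s₃)·C(2s₁+s₃, s₃)·C(2s₂+s₃, s₃)·(2s₁−1)!!·(2s₂−1)!!·s₃!·(s₁!·s₂!·s₃!) = (2s−1)!!·2^{s₃}·s!, where C(n,k) denotes the binomial coefficient and (2k−1)!! the double factorial of 2k−1 (with (−1)!! := 1). -/
open Nat
open scoped Nat

lemma dfac_odd_step (k : ℕ) : (2 * k + 1)‼ = (2 * k + 1) * (2 * k - 1)‼ := by
  cases k with
  | zero => simp [Nat.doubleFactorial]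
  | succ n =>
    have h : 2 * (n + 1) + 1 = (2 * n + 1) + 2 := by ring
    have h2 : 2 * (n + 1) - 1 = 2 * n + 1 := by omega
    rw [h, h2, Nat.doubleFactorial]

lemma dfac_fact (k : ℕ) : (2 * k - 1)‼ * 2 ^ k * k ! = (2 * k)! := by
  induction k with
  | zero => simp
  | succ n ih =>
    have h1 : 2 * (n + 1) - 1 = 2 * n + 1 := by omega
    have h2 : 2 * (n + 1) = (2 * n + 1) + 1 := by ring
    rw [h1, dfac_odd_step, h2, Nat.factorial_succ, Nat.factorial_succ,
      show (2 * n + 1) + 1 = 2 * (n + 1) by ring]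
    calc (2 * n + 1) * (2 * n - 1)‼ * 2 ^ (n + 1) * ((n + 1) * n !)
        = (2 * (n + 1)) * ((2 * n + 1) * ((2 * n - 1)‼ * 2 ^ n * n !)) := by
          rw [pow_succ]; ring
      _ = 2 * (n + 1) * ((2 * n + 1) * (2 * n)!) := by rw [ih]
      _ = 2 * (n + 1) * ((2 * n + 1)!) := by
          rw [show (2 * n + 1)! = (2 * n + 1) * (2 * n)! from Nat.factorial_succ _]

/-- Pairing-count identity:
`C(2s, 2s₁+s₃)·C(2s₁+s₃, s₃)·C(2s₂+s₃, s₃)·(2s₁−1)‼·(2s₂−1)‼·s₃!·(s₁!·s₂!·s₃!)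
  = (2s−1)‼·2^{s₃}·s!` where `s = s₁ + s₂ + s₃` (with the convention `(−1)‼ = 1`,
realized by truncated subtraction: `2·0 − 1 = 0` and `0‼ = 1`). -/
theorem pairing_count_identity (s₁ s₂ s₃ s : ℕ) (hs : s = s₁ + s₂ + s₃) :
    Nat.choose (2 * s) (2 * s₁ + s₃) * Nat.choose (2 * s₁ + s₃) s₃ *
        Nat.choose (2 * s₂ + s₃) s₃ *
        (2 * s₁ - 1)‼ * (2 * s₂ - 1)‼ * s₃ ! * (s₁ ! * s₂ ! * s₃ !)
      = (2 * s - 1)‼ * 2 ^ s₃ * s ! := by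
  subst hs
  set a := 2 * s₁ + s₃ with ha
  set b := 2 * s₂ + s₃ with hb
  have hab : 2 * (s₁ + s₂ + s₃) = a + b := by omega
  have h1 : Nat.choose (a + b) a * a ! * b ! = (a + b)! := by
    have := Nat.choose_mul_factorial_mul_factorial (Nat.le_add_right a b)
    simpa using this
  have h2 : Nat.choose a s₃ * s₃ ! * (2 * s₁)! = a ! := by
    have := Nat.choose_mul_factorial_mul_factorial (by omega : s₃ ≤ a)
    simpa [show a - s₃ = 2 * s₁ by omega] using this
  have h3 : Nat.choose b s₃ * s₃ ! * (2 * s₂)! = b ! := by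
    have := Nat.choose_mul_factorial_mul_factorial (by omega : s₃ ≤ b)
    simpa [show b - s₃ = 2 * s₂ by omega] using this
  apply Nat.eq_of_mul_eq_mul_right (Nat.pow_pos (by norm_num) :
    0 < 2 ^ (s₁ + s₂))
  calc Nat.choose (2 * (s₁ + s₂ + s₃)) a * Nat.choose a s₃ * Nat.choose b s₃ *
        (2 * s₁ - 1)‼ * (2 * s₂ - 1)‼ * s₃ ! * (s₁ ! * s₂ ! * s₃ !) * 2 ^ (s₁ + s₂)
      = Nat.choose (2 * (s₁ + s₂ + s₃)) a *
          ((Nat.choose a s₃ * s₃ ! * ((2 * s₁ - 1)‼ * 2 ^ s₁ * s₁ !)) *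
           (Nat.choose b s₃ * s₃ ! * ((2 * s₂ - 1)‼ * 2 ^ s₂ * s₂ !))) := by
        rw [pow_add]; ring
    _ = Nat.choose (2 * (s₁ + s₂ + s₃)) a *
          ((Nat.choose a s₃ * s₃ ! * (2 * s₁)!) *
           (Nat.choose b s₃ * s₃ ! * (2 * s₂)!)) := by rw [dfac_fact, dfac_fact]
    _ = Nat.choose (a + b) a * a ! * b ! := by rw [h2, h3, hab]; ring
    _ = (a + b)! := h1
    _ = (2 * (s₁ + s₂ + s₃) - 1)‼ * 2 ^ (s₁ + s₂ + s₃) * (s₁ + s₂ + s₃)! := by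
        rw [← hab, ← dfac_fact]
    _ = (2 * (s₁ + s₂ + s₃) - 1)‼ * 2 ^ s₃ * (s₁ + s₂ + s₃)! * 2 ^ (s₁ + s₂) := by
        rw [show s₁ + s₂ + s₃ = s₃ + (s₁ + s₂) by ring, pow_add]; ring
end

section
/- Expectation of T₁ under homoscedasticity: let X be an n×p real matrix of full column rank p < n, let P := I_n − X(XᵀX)⁻¹Xᵀ, and let ε₁,…,εₙ be i.i.d. real random variables with distribution symmetric about 0, E ε₁² = 1 and M₄ := E ε₁⁴ < ∞. With residuals ε̂ := Pε, E[ Σ_{i=1}^n ε̂ᵢ⁴ ] = 3·tr(P∘P) + ν₄·tr((P∘P)²), where ν₄ := M₄ − 3. -/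
open MeasureTheory ProbabilityTheory Matrix
open scoped Matrix

private lemma abcd_bound' (a b c d : ℝ) :
    |a * b * c * d| ≤ (a ^ 4 + b ^ 4 + c ^ 4 + d ^ 4) / 4 := by
  have h : |a * b * c * d| = |a| * |b| * |c| * |d| := by rw [abs_mul, abs_mul, abs_mul]
  rw [h]
  have ha4 : |a| ^ 4 = a ^ 4 := by rw [← abs_pow]; exact abs_of_nonneg (by positivity)
  have hb4 : |b| ^ 4 = b ^ 4 := by rw [← abs_pow]; exact abs_of_nonneg (by positivity)
  have hc4 : |c| ^ 4 = c ^ 4 := by rw [← abs_pow]; exact abs_of_nonneg (by positivity)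
  have hd4 : |d| ^ 4 = d ^ 4 := by rw [← abs_pow]; exact abs_of_nonneg (by positivity)
  nlinarith [sq_nonneg (|a| * |b| - |c| * |d|), sq_nonneg (|a| ^ 2 - |b| ^ 2),
    sq_nonneg (|c| ^ 2 - |d| ^ 2), abs_nonneg a, abs_nonneg b, abs_nonneg c, abs_nonneg d]

private lemma sum_pow_four_expand {n : ℕ} (a e : Fin n → ℝ) :
    (∑ j, a j * e j) ^ 4
      = ∑ j, ∑ k, ∑ l, ∑ m, (a j * a k * a l * a m) * (e j * e k * e l * e m) := by
  have h : (∑ j, a j * e j) ^ 4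
      = (∑ j, a j * e j) * ((∑ k, a k * e k) * ((∑ l, a l * e l) * (∑ m, a m * e m))) := by ring
  rw [h]
  simp_rw [Finset.sum_mul, Finset.mul_sum]
  refine Finset.sum_congr rfl fun j _ => Finset.sum_congr rfl fun k _ =>
    Finset.sum_congr rfl fun l _ => Finset.sum_congr rfl fun m _ => by ring

private lemma combin_sum {n : ℕ} (P : Matrix (Fin n) (Fin n) ℝ) (ν4 : ℝ)
    (hsym : ∀ i j, P j i = P i j) (hid : ∀ i, ∑ j, P i j * P j i = P i i) :
    (∑ i, ∑ j, ∑ k, ∑ l, ∑ m, (P i j * P i k * P i l * P i m) *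
      ((if j = k then (1:ℝ) else 0) * (if l = m then 1 else 0)
      + (if j = l then 1 else 0) * (if k = m then 1 else 0)
      + (if j = m then 1 else 0) * (if k = l then 1 else 0)
      + ν4 * ((if j = k then 1 else 0) * (if j = l then 1 else 0) * (if j = m then 1 else 0))))
    = 3 * (P ⊙ P).trace + ν4 * ((P ⊙ P) * (P ⊙ P)).trace := by
  have hdiag : ∀ i, ∑ j, P i j * P i j = P i i := by
    intro i
    rw [← hid i]
    exact Finset.sum_congr rfl fun j _ => by rw [hsym i j]
  have htr1 : (P ⊙ P).trace = ∑ i, P i i * P i i := by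
    simp [Matrix.trace, Matrix.diag, Matrix.hadamard_apply]
  have htr2 : ((P ⊙ P) * (P ⊙ P)).trace = ∑ i, ∑ j, P i j * P i j * (P i j * P i j) := by
    simp only [Matrix.trace, Matrix.diag, Matrix.mul_apply, Matrix.hadamard_apply]
    refine Finset.sum_congr rfl fun i _ => Finset.sum_congr rfl fun j _ => by rw [hsym i j]
  have h1 : (∑ i, ∑ j, ∑ k, ∑ l, ∑ m, (P i j * P i k * P i l * P i m) *
      ((if j = k then (1:ℝ) else 0) * (if l = m then 1 else 0)))
      = ∑ i, P i i * P i i := by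
    simp only [mul_ite, ite_mul, mul_zero, zero_mul, mul_one, one_mul,
      Finset.sum_ite_eq, Finset.mem_univ, if_true, Finset.sum_const_zero, Finset.sum_ite_irrel]
    refine Finset.sum_congr rfl fun i _ => ?_
    rw [← hdiag i, Finset.sum_mul_sum]
    exact Finset.sum_congr rfl fun a _ => Finset.sum_congr rfl fun b _ => by ring
  have h2 : (∑ i, ∑ j, ∑ k, ∑ l, ∑ m, (P i j * P i k * P i l * P i m) *
      ((if j = l then (1:ℝ) else 0) * (if k = m then 1 else 0)))
      = ∑ i, P i i * P i i := by
    simp only [mul_ite, ite_mul, mul_zero, zero_mul, mul_one, one_mul,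
      Finset.sum_ite_eq, Finset.mem_univ, if_true, Finset.sum_const_zero, Finset.sum_ite_irrel]
    refine Finset.sum_congr rfl fun i _ => ?_
    rw [← hdiag i, Finset.sum_mul_sum]
    exact Finset.sum_congr rfl fun a _ => Finset.sum_congr rfl fun b _ => by ring
  have h3 : (∑ i, ∑ j, ∑ k, ∑ l, ∑ m, (P i j * P i k * P i l * P i m) *
      ((if j = m then (1:ℝ) else 0) * (if k = l then 1 else 0)))
      = ∑ i, P i i * P i i := by
    simp only [mul_ite, ite_mul, mul_zero, zero_mul, mul_one, one_mul,
      Finset.sum_ite_eq, Finset.mem_univ, if_true, Finset.sum_const_zero, Finset.sum_ite_irrel]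
    refine Finset.sum_congr rfl fun i _ => ?_
    rw [← hdiag i, Finset.sum_mul_sum]
    exact Finset.sum_congr rfl fun a _ => Finset.sum_congr rfl fun b _ => by ring
  have h4 : (∑ i, ∑ j, ∑ k, ∑ l, ∑ m, (P i j * P i k * P i l * P i m) *
      (ν4 * ((if j = k then (1:ℝ) else 0) * (if j = l then 1 else 0) * (if j = m then 1 else 0))))
      = ν4 * ∑ i, ∑ j, P i j * P i j * (P i j * P i j) := by
    simp only [mul_ite, ite_mul, mul_zero, zero_mul, mul_one, one_mul,
      Finset.sum_ite_eq, Finset.mem_univ, if_true, Finset.sum_const_zero, Finset.sum_ite_irrel]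
    rw [Finset.mul_sum]
    refine Finset.sum_congr rfl fun i _ => ?_
    rw [Finset.mul_sum]
    exact Finset.sum_congr rfl fun j _ => by ring
  calc (∑ i, ∑ j, ∑ k, ∑ l, ∑ m, (P i j * P i k * P i l * P i m) *
      ((if j = k then (1:ℝ) else 0) * (if l = m then 1 else 0)
      + (if j = l then 1 else 0) * (if k = m then 1 else 0)
      + (if j = m then 1 else 0) * (if k = l then 1 else 0)
      + ν4 * ((if j = k then 1 else 0) * (if j = l then 1 else 0) * (if j = m then 1 else 0))))
      = (∑ i, ∑ j, ∑ k, ∑ l, ∑ m, (P i j * P i k * P i l * P i m) *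
          ((if j = k then (1:ℝ) else 0) * (if l = m then 1 else 0)))
        + ((∑ i, ∑ j, ∑ k, ∑ l, ∑ m, (P i j * P i k * P i l * P i m) *
          ((if j = l then (1:ℝ) else 0) * (if k = m then 1 else 0)))
        + ((∑ i, ∑ j, ∑ k, ∑ l, ∑ m, (P i j * P i k * P i l * P i m) *
          ((if j = m then (1:ℝ) else 0) * (if k = l then 1 else 0)))
        + (∑ i, ∑ j, ∑ k, ∑ l, ∑ m, (P i j * P i k * P i l * P i m) *
          (ν4 * ((if j = k then (1:ℝ) else 0) * (if j = l then 1 else 0) * (if j = m then 1 else 0)))))) := by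
        simp only [← Finset.sum_add_distrib]
        refine Finset.sum_congr rfl fun i _ => Finset.sum_congr rfl fun j _ =>
          Finset.sum_congr rfl fun k _ => Finset.sum_congr rfl fun l _ =>
          Finset.sum_congr rfl fun m _ => by ring
    _ = 3 * (P ⊙ P).trace + ν4 * ((P ⊙ P) * (P ⊙ P)).trace := by
        rw [h1, h2, h3, h4, htr1, htr2]; ring

/-- Expectation of `T₁ = Σᵢ ε̂ᵢ⁴` under homoscedasticity: with `P = I − X(XᵀX)⁻¹Xᵀ` the hat
matrix of a full-column-rank design `X` and residuals `ε̂ = Pε`,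
`E[Σᵢ ε̂ᵢ⁴] = 3·tr(P∘P) + ν₄·tr((P∘P)²)` where `ν₄ = M₄ − 3`. -/
theorem expectation_T1_homoscedastic
    {Ω : Type*} [MeasurableSpace Ω] (μ : Measure Ω) [IsProbabilityMeasure μ]
    {n p : ℕ} (hpn : p < n)
    (X : Matrix (Fin n) (Fin p) ℝ) (hrank : X.rank = p)
    (P : Matrix (Fin n) (Fin n) ℝ) (hP : P = 1 - X * (Xᵀ * X)⁻¹ * Xᵀ)
    (ε : Fin n → Ω → ℝ)
    (hmeas : ∀ i, Measurable (ε i))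
    (hindep : iIndepFun ε μ)
    (hident : ∀ i j, μ.map (ε i) = μ.map (ε j))
    (hsymm : ∀ i, μ.map (ε i) = μ.map (fun ω => -ε i ω))
    (hvar : ∀ i, ∫ ω, (ε i ω) ^ 2 ∂μ = 1)
    (hint4 : ∀ i, Integrable (fun ω => (ε i ω) ^ 4) μ)
    (M4 ν4 : ℝ)
    (hM4 : ∀ i, ∫ ω, (ε i ω) ^ 4 ∂μ = M4)
    (hν4 : ν4 = M4 - 3)
    (εhat : Fin n → Ω → ℝ)
    (hεhat : ∀ i ω, εhat i ω = ∑ j, P i j * ε j ω) :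
    (∫ ω, (∑ i, εhat i ω ^ 4) ∂μ)
      = 3 * (P ⊙ P).trace + ν4 * ((P ⊙ P) * (P ⊙ P)).trace := by
  classical
  -- ### Matrix facts
  have hU : IsUnit (Xᵀ * X) := by
    have h1 : (Xᵀ * X).rank = Fintype.card (Fin p) := by
      rw [Matrix.rank_transpose_mul_self, hrank, Fintype.card_fin]
    rw [← Matrix.mulVec_surjective_iff_isUnit]
    have htop : LinearMap.range (Xᵀ * X).mulVecLin = ⊤ := by
      apply Submodule.eq_top_of_finrank_eq
      rw [← Matrix.rank, h1]
      simp [Module.finrank_pi]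
    intro y
    exact LinearMap.range_eq_top.mp htop y
  have hdet : IsUnit (Xᵀ * X).det := (Matrix.isUnit_iff_isUnit_det _).mp hU
  have hinv : (Xᵀ * X)⁻¹ * (Xᵀ * X) = 1 := Matrix.nonsing_inv_mul _ hdet
  have hinvT : ((Xᵀ * X)⁻¹)ᵀ = (Xᵀ * X)⁻¹ := by
    rw [Matrix.transpose_nonsing_inv, Matrix.transpose_mul, Matrix.transpose_transpose]
  have hPT : Pᵀ = P := by
    rw [hP]
    simp [Matrix.transpose_sub, Matrix.transpose_mul, hinvT, Matrix.mul_assoc]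
  have hPP : P * P = P := by
    rw [hP]
    have hAA : (X * (Xᵀ * X)⁻¹ * Xᵀ) * (X * (Xᵀ * X)⁻¹ * Xᵀ) = X * (Xᵀ * X)⁻¹ * Xᵀ := by
      calc (X * (Xᵀ * X)⁻¹ * Xᵀ) * (X * (Xᵀ * X)⁻¹ * Xᵀ)
          = X * (((Xᵀ * X)⁻¹ * (Xᵀ * X)) * ((Xᵀ * X)⁻¹ * Xᵀ)) := by
            simp only [Matrix.mul_assoc]
        _ = X * (Xᵀ * X)⁻¹ * Xᵀ := by rw [hinv]; simp [Matrix.mul_assoc]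
    rw [Matrix.sub_mul, Matrix.mul_sub, Matrix.mul_sub, hAA]
    simp
  have hsym : ∀ i j, P j i = P i j := by
    intro i j
    conv_lhs => rw [← hPT]
    rfl
  have hid : ∀ i, ∑ j, P i j * P j i = P i i := by
    intro i
    have := congrFun (congrFun hPP i) i
    rw [← this, Matrix.mul_apply]
  -- ### Moment helpers
  have hodd : ∀ (i : Fin n) (k : ℕ), Odd k → ∫ ω, ε i ω ^ k ∂μ = 0 := by
    intro i k hk
    have hmk : AEStronglyMeasurable (fun x : ℝ => x ^ k) (μ.map (ε i)) :=
      (measurable_id.pow_const k).aestronglyMeasurable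
    have hmk2 : AEStronglyMeasurable (fun x : ℝ => x ^ k) (μ.map (fun ω => -ε i ω)) :=
      (measurable_id.pow_const k).aestronglyMeasurable
    have h1 : ∫ ω, ε i ω ^ k ∂μ = ∫ x, x ^ k ∂(μ.map (ε i)) :=
      (integral_map (hmeas i).aemeasurable hmk).symm
    have h2 : ∫ x, x ^ k ∂(μ.map (fun ω => -ε i ω)) = ∫ ω, (-ε i ω) ^ k ∂μ :=
      integral_map (hmeas i).neg.aemeasurable hmk2
    have h3 : ∫ ω, (-ε i ω) ^ k ∂μ = - ∫ ω, ε i ω ^ k ∂μ := by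
      simp_rw [hk.neg_pow]
      exact integral_neg _
    have h4 := h1.trans
      ((by rw [hsymm i]) : ∫ x, x ^ k ∂(μ.map (ε i)) = ∫ x, x ^ k ∂(μ.map (fun ω => -ε i ω)))
    rw [h2, h3] at h4
    linarith
  have hE1 : ∀ i, ∫ ω, ε i ω ∂μ = 0 := by
    intro i
    have := hodd i 1 ⟨0, rfl⟩
    simpa using this
  have hE3 : ∀ i, ∫ ω, ε i ω ^ 3 ∂μ = 0 := fun i => hodd i 3 ⟨1, rfl⟩
  have hpair : ∀ a b : Fin n, a ≠ b → ∀ q r : ℕ,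
      ∫ ω, ε a ω ^ q * ε b ω ^ r ∂μ = (∫ ω, ε a ω ^ q ∂μ) * ∫ ω, ε b ω ^ r ∂μ := by
    intro a b hab q r
    have h : IndepFun (fun ω => ε a ω ^ q) (fun ω => ε b ω ^ r) μ :=
      (hindep.indepFun hab).comp (measurable_id.pow_const q) (measurable_id.pow_const r)
    exact h.integral_fun_mul_eq_mul_integral ((hmeas a).pow_const q).aestronglyMeasurable
      ((hmeas b).pow_const r).aestronglyMeasurable
  have hzero : ∀ (c : Fin n → ℕ) (s : Finset (Fin n)) (b : Fin n), b ∉ s → c b = 1 →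
      ∫ ω, (∏ v ∈ s, ε v ω ^ c v) * ε b ω ∂μ = 0 := by
    intro c s b hb hcb
    have hfam : iIndepFun (fun v => fun ω => ε v ω ^ c v) μ :=
      hindep.comp (fun v x => x ^ c v) (fun v => measurable_id.pow_const (c v))
    have hind := hfam.indepFun_finsetProd_of_notMem
      (fun v => (hmeas v).pow_const (c v)) hb
    have hm1 : AEStronglyMeasurable (fun ω => ∏ v ∈ s, ε v ω ^ c v) μ :=
      (Finset.measurable_prod s (fun v _ => (hmeas v).pow_const (c v))).aestronglyMeasurable
    have hpe : (∏ j ∈ s, fun ω => ε j ω ^ c j) = fun ω => ∏ v ∈ s, ε v ω ^ c v :=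
      funext fun ω => Finset.prod_apply ω s _
    have h := hind.integral_fun_mul_eq_mul_integral (hpe ▸ hm1) ((hmeas b).pow_const (c b)).aestronglyMeasurable
    simp only [Finset.prod_apply] at h
    rw [hcb] at h
    simp only [pow_one] at h
    rw [h, hE1 b, mul_zero]
  -- ### Mixed fourth moments
  have hmom : ∀ j k l m : Fin n, ∫ ω, ε j ω * ε k ω * ε l ω * ε m ω ∂μ =
      (if j = k then (1:ℝ) else 0) * (if l = m then 1 else 0)
      + (if j = l then 1 else 0) * (if k = m then 1 else 0)
      + (if j = m then 1 else 0) * (if k = l then 1 else 0)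
      + ν4 * ((if j = k then 1 else 0) * (if j = l then 1 else 0) * (if j = m then 1 else 0)) := by
    have hz31 : ∀ a b : Fin n, a ≠ b → ∫ ω, ε a ω ^ 3 * ε b ω ∂μ = 0 := by
      intro a b hab
      have h := hpair a b hab 3 1
      simp only [pow_one] at h
      rw [h, hE3 a, zero_mul]
    have hz13 : ∀ a b : Fin n, a ≠ b → ∫ ω, ε a ω * ε b ω ^ 3 ∂μ = 0 := by
      intro a b hab
      have h := hpair a b hab 1 3
      simp only [pow_one] at h
      rw [h, hE3 b, mul_zero]
    have hp22 : ∀ a b : Fin n, a ≠ b → ∫ ω, ε a ω ^ 2 * ε b ω ^ 2 ∂μ = 1 := by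
      intro a b hab
      rw [hpair a b hab 2 2, hvar a, hvar b, mul_one]
    have hz211 : ∀ a b c : Fin n, a ≠ b → a ≠ c → b ≠ c →
        ∫ ω, ε a ω ^ 2 * ε b ω * ε c ω ∂μ = 0 := by
      intro a b c hab hac hbc
      have h := hzero (fun v => if v = a then 2 else 1) {a, b} c
        (by simp [hac.symm, hbc.symm]) (by simp [(hac.symm : c ≠ a)])
      rw [show (fun ω => ε a ω ^ 2 * ε b ω * ε c ω)
          = fun ω => (∏ v ∈ ({a, b} : Finset (Fin n)), ε v ω ^ (if v = a then 2 else 1)) * ε c ω from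
        funext fun ω => by rw [Finset.prod_pair hab]; simp [hab.symm]]
      exact h
    have hz1111 : ∀ a b c d : Fin n, a ≠ b → a ≠ c → a ≠ d → b ≠ c → b ≠ d → c ≠ d →
        ∫ ω, ε a ω * ε b ω * ε c ω * ε d ω ∂μ = 0 := by
      intro a b c d hab hac had hbc hbd hcd
      have h := hzero (fun _ => 1) {a, b, c} d
        (by simp [had.symm, hbd.symm, hcd.symm]) rfl
      rw [show (fun ω => ε a ω * ε b ω * ε c ω * ε d ω)
          = fun ω => (∏ v ∈ ({a, b, c} : Finset (Fin n)), ε v ω ^ 1) * ε d ω from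
        funext fun ω => by
          rw [Finset.prod_insert (by simp [hab, hac]), Finset.prod_pair hbc]; ring]
      exact h
    intro j k l m
    by_cases hjk : j = k
    · subst hjk
      by_cases hjl : j = l
      · subst hjl
        by_cases hjm : j = m
        · subst hjm
          rw [show (fun ω => ε j ω * ε j ω * ε j ω * ε j ω) = fun ω => ε j ω ^ 4 from
            funext fun ω => by ring]
          rw [hM4 j]; simp; linarith
        · rw [show (fun ω => ε j ω * ε j ω * ε j ω * ε m ω) = fun ω => ε j ω ^ 3 * ε m ω from
            funext fun ω => by ring]
          rw [hz31 j m hjm]; simp [hjm]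
      · by_cases hjm : j = m
        · subst hjm
          rw [show (fun ω => ε j ω * ε j ω * ε l ω * ε j ω) = fun ω => ε j ω ^ 3 * ε l ω from
            funext fun ω => by ring]
          rw [hz31 j l hjl]; simp [hjl, Ne.symm hjl]
        · by_cases hlm : l = m
          · subst hlm
            rw [show (fun ω => ε j ω * ε j ω * ε l ω * ε l ω) = fun ω => ε j ω ^ 2 * ε l ω ^ 2 from
              funext fun ω => by ring]
            rw [hp22 j l hjl]; simp [hjl, hjm]
          · rw [show (fun ω => ε j ω * ε j ω * ε l ω * ε m ω)
                = fun ω => ε j ω ^ 2 * ε l ω * ε m ω from funext fun ω => by ring]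
            rw [hz211 j l m hjl hjm hlm]; simp [hjl, hjm, hlm]
    · by_cases hjl : j = l
      · subst hjl
        by_cases hkm : k = m
        · subst hkm
          rw [show (fun ω => ε j ω * ε k ω * ε j ω * ε k ω) = fun ω => ε j ω ^ 2 * ε k ω ^ 2 from
            funext fun ω => by ring]
          rw [hp22 j k hjk]; simp [hjk]
        · by_cases hjm : j = m
          · subst hjm
            rw [show (fun ω => ε j ω * ε k ω * ε j ω * ε j ω) = fun ω => ε j ω ^ 3 * ε k ω from
              funext fun ω => by ring]
            rw [hz31 j k hjk]; simp [hjk, hkm]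
          · rw [show (fun ω => ε j ω * ε k ω * ε j ω * ε m ω)
                = fun ω => ε j ω ^ 2 * ε k ω * ε m ω from funext fun ω => by ring]
            rw [hz211 j k m hjk hjm hkm]; simp [hjk, hjm, hkm]
      · by_cases hjm : j = m
        · subst hjm
          by_cases hkl : k = l
          · subst hkl
            rw [show (fun ω => ε j ω * ε k ω * ε k ω * ε j ω) = fun ω => ε j ω ^ 2 * ε k ω ^ 2 from
              funext fun ω => by ring]
            rw [hp22 j k hjk]; simp [hjk, hjl]
          · rw [show (fun ω => ε j ω * ε k ω * ε l ω * ε j ω)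
                = fun ω => ε j ω ^ 2 * ε k ω * ε l ω from funext fun ω => by ring]
            rw [hz211 j k l hjk hjl hkl]; simp [hjk, hjl, hkl]
        · by_cases hkl : k = l
          · subst hkl
            by_cases hkm : k = m
            · subst hkm
              rw [show (fun ω => ε j ω * ε k ω * ε k ω * ε k ω) = fun ω => ε j ω * ε k ω ^ 3 from
                funext fun ω => by ring]
              rw [hz13 j k hjk]; simp [hjk, hjl, hjm]
            · rw [show (fun ω => ε j ω * ε k ω * ε k ω * ε m ω)
                  = fun ω => ε k ω ^ 2 * ε j ω * ε m ω from funext fun ω => by ring]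
              rw [hz211 k j m (fun h => hjk h.symm) hkm hjm]; simp [hjk, hjl, hjm]
          · by_cases hkm : k = m
            · subst hkm
              rw [show (fun ω => ε j ω * ε k ω * ε l ω * ε k ω)
                  = fun ω => ε k ω ^ 2 * ε j ω * ε l ω from funext fun ω => by ring]
              rw [hz211 k j l (fun h => hjk h.symm) (fun h => hkl h) hjl]
              simp [hjk, hjl, hjm]
            · by_cases hlm : l = m
              · subst hlm
                rw [show (fun ω => ε j ω * ε k ω * ε l ω * ε l ω)
                    = fun ω => ε l ω ^ 2 * ε j ω * ε k ω from funext fun ω => by ring]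
                rw [hz211 l j k (fun h => hjl h.symm) (fun h => hkl h.symm) hjk]
                simp [hjk, hjl, hjm]
              · rw [hz1111 j k l m hjk hjl hjm hkl hkm hlm]
                simp [hjk, hjl, hjm, hkl, hkm, hlm]
  -- ### Integrability of quadruple products
  have intprod : ∀ j k l m : Fin n,
      Integrable (fun ω => ε j ω * ε k ω * ε l ω * ε m ω) μ := by
    intro j k l m
    have hg : Integrable
        (fun ω => (ε j ω ^ 4 + ε k ω ^ 4 + ε l ω ^ 4 + ε m ω ^ 4) / 4) μ :=
      ((((hint4 j).add (hint4 k)).add (hint4 l)).add (hint4 m)).div_const 4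
    refine hg.mono' ?_ ?_
    · exact ((((hmeas j).mul (hmeas k)).mul (hmeas l)).mul (hmeas m)).aestronglyMeasurable
    · filter_upwards with ω
      rw [Real.norm_eq_abs]
      exact abcd_bound' _ _ _ _
  have intterm : ∀ (i j k l m : Fin n),
      Integrable (fun ω => (P i j * P i k * P i l * P i m) * (ε j ω * ε k ω * ε l ω * ε m ω)) μ :=
    fun i j k l m => (intprod j k l m).const_mul _
  -- ### Expand the integrand
  have hpt : (fun ω => ∑ i, εhat i ω ^ 4)
      = fun ω => ∑ i, ∑ j, ∑ k, ∑ l, ∑ m,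
        (P i j * P i k * P i l * P i m) * (ε j ω * ε k ω * ε l ω * ε m ω) :=
    funext fun ω => Finset.sum_congr rfl fun i _ => by
      rw [hεhat i ω]; exact sum_pow_four_expand (fun j => P i j) (fun j => ε j ω)
  rw [hpt]
  rw [integral_finset_sum _ (fun i _ => integrable_finset_sum _ fun j _ =>
    integrable_finset_sum _ fun k _ => integrable_finset_sum _ fun l _ =>
    integrable_finset_sum _ fun m _ => intterm i j k l m)]
  have hswap : ∀ i : Fin n, (∫ ω, (∑ j, ∑ k, ∑ l, ∑ m,
      (P i j * P i k * P i l * P i m) * (ε j ω * ε k ω * ε l ω * ε m ω)) ∂μ)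
      = ∑ j, ∑ k, ∑ l, ∑ m, (P i j * P i k * P i l * P i m) *
          ∫ ω, ε j ω * ε k ω * ε l ω * ε m ω ∂μ := by
    intro i
    rw [integral_finset_sum _ (fun j _ => integrable_finset_sum _ fun k _ =>
      integrable_finset_sum _ fun l _ => integrable_finset_sum _ fun m _ => intterm i j k l m)]
    refine Finset.sum_congr rfl fun j _ => ?_
    rw [integral_finset_sum _ (fun k _ => integrable_finset_sum _ fun l _ =>
      integrable_finset_sum _ fun m _ => intterm i j k l m)]
    refine Finset.sum_congr rfl fun k _ => ?_
    rw [integral_finset_sum _ (fun l _ => integrable_finset_sum _ fun m _ => intterm i j k l m)]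
    refine Finset.sum_congr rfl fun l _ => ?_
    rw [integral_finset_sum _ (fun m _ => intterm i j k l m)]
    refine Finset.sum_congr rfl fun m _ => ?_
    exact integral_const_mul _ _
  calc (∑ i, ∫ ω, (∑ j, ∑ k, ∑ l, ∑ m,
        (P i j * P i k * P i l * P i m) * (ε j ω * ε k ω * ε l ω * ε m ω)) ∂μ)
      = ∑ i, ∑ j, ∑ k, ∑ l, ∑ m, (P i j * P i k * P i l * P i m) *
          ((if j = k then (1:ℝ) else 0) * (if l = m then 1 else 0)
          + (if j = l then 1 else 0) * (if k = m then 1 else 0)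
          + (if j = m then 1 else 0) * (if k = l then 1 else 0)
          + ν4 * ((if j = k then 1 else 0) * (if j = l then 1 else 0) * (if j = m then 1 else 0))) := by
        refine Finset.sum_congr rfl fun i _ => ?_
        rw [hswap i]
        exact Finset.sum_congr rfl fun j _ => Finset.sum_congr rfl fun k _ =>
          Finset.sum_congr rfl fun l _ => Finset.sum_congr rfl fun m _ => by rw [hmom j k l m]
    _ = 3 * (P ⊙ P).trace + ν4 * ((P ⊙ P) * (P ⊙ P)).trace := combin_sum P ν4 hsym hid
end
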